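/- Let C ⊆ ℝⁿ be a nonempty closed convex set that is approximately M-decomposable. Then dom σ_C = (rec C)°, the polar cone of the recession cone of C. -/
import Mathlib


open scoped InnerProductSpace Pointwise ENNReal
open Metric Filter

/-- The support function `σ_C(d) = sup_{x ∈ C} ⟪d, x⟫` of a set `C ⊆ ℝⁿ`,
with values in the extended reals. -/
noncomputable def suppFun {n : ℕ} (C : Set (EuclideanSpace ℝ (Fin n)))
    (d : EuclideanSpace ℝ (Fin n)) : EReal :=
  ⨆ x ∈ C, ((⟪d, x⟫_ℝ : ℝ) : EReal)

/-- The effective domain `dom σ_C = {d : σ_C(d) < +∞}` of the support function. -/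
def suppDom {n : ℕ} (C : Set (EuclideanSpace ℝ (Fin n))) :
    Set (EuclideanSpace ℝ (Fin n)) :=
  {d | suppFun C d < ⊤}

/-- The recession cone `rec C` of a set `C`. -/
def recCone {n : ℕ} (C : Set (EuclideanSpace ℝ (Fin n))) :
    Set (EuclideanSpace ℝ (Fin n)) :=
  {y | ∀ x ∈ C, ∀ t : ℝ, 0 ≤ t → x + t • y ∈ C}

/-- The truncation `C_r = (C ∩ rB) + rec C` of `C` of radius `r`. -/
def trunc {n : ℕ} (C : Set (EuclideanSpace ℝ (Fin n))) (r : ℝ) :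
    Set (EuclideanSpace ℝ (Fin n)) :=
  (C ∩ closedBall 0 r) + recCone C

/-- `C` is approximately M-decomposable: for every `ε > 0` there is `r > 0`
with `C ⊆ C_r + εB`. -/
def ApproxMDecomposable {n : ℕ} (C : Set (EuclideanSpace ℝ (Fin n))) : Prop :=
  ∀ ε > (0 : ℝ), ∃ r > (0 : ℝ), C ⊆ trunc C r + closedBall 0 ε

/-- `C` is M-decomposable: `C = M + rec C` for some compact convex `M`. -/
def MDecomposable {n : ℕ} (C : Set (EuclideanSpace ℝ (Fin n))) : Prop :=
  ∃ M : Set (EuclideanSpace ℝ (Fin n)), IsCompact M ∧ Convex ℝ M ∧ C = M + recCone C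

/-- `C` is hyperbolic: `C ⊆ M + rec C` for some compact convex `M`. -/
def Hyperbolic {n : ℕ} (C : Set (EuclideanSpace ℝ (Fin n))) : Prop :=
  ∃ M : Set (EuclideanSpace ℝ (Fin n)), IsCompact M ∧ Convex ℝ M ∧ C ⊆ M + recCone C

/-- The polar cone `K° = {d : ⟪d, x⟫ ≤ 0 for all x ∈ K}` of a cone `K`. -/
def polarCone {n : ℕ} (K : Set (EuclideanSpace ℝ (Fin n))) :
    Set (EuclideanSpace ℝ (Fin n)) :=
  {d | ∀ x ∈ K, ⟪d, x⟫_ℝ ≤ 0}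

/-- if `C` is approximately M-decomposable, then `dom σ_C = (rec C)°`. -/
theorem approxMDecomposable_suppDom_eq_polar_recCone {n : ℕ}
    (C : Set (EuclideanSpace ℝ (Fin n)))
    (hne : C.Nonempty) (hcl : IsClosed C) (hconv : Convex ℝ C)
    (h : ApproxMDecomposable C) :
    suppDom C = polarCone (recCone C) := by
  ext d
  simp only [suppDom, Set.mem_setOf_eq, polarCone]
  constructor
  · intro hd y hy
    obtain ⟨x₀, hx₀⟩ := hne
    by_contra hpos
    push_neg at hpos
    have hle : ∀ t : ℝ, 0 ≤ t →
        ((⟪d, x₀⟫_ℝ + t * ⟪d, y⟫_ℝ : ℝ) : EReal) ≤ suppFun C d := by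
      intro t ht
      have hx : x₀ + t • y ∈ C := hy x₀ hx₀ t ht
      have hv : ⟪d, x₀ + t • y⟫_ℝ = ⟪d, x₀⟫_ℝ + t * ⟪d, y⟫_ℝ := by
        rw [inner_add_right, real_inner_smul_right]
      have := le_iSup₂ (f := fun x (_ : x ∈ C) => ((⟪d, x⟫_ℝ : ℝ) : EReal))
        (x₀ + t • y) hx
      rwa [hv] at this
    have hbot : suppFun C d ≠ ⊥ := by
      intro hb
      have := hle 0 le_rfl
      rw [hb] at this
      exact (EReal.coe_ne_bot _) (le_bot_iff.mp this)
    set s : ℝ := (suppFun C d).toReal with hs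
    have hsc : ((s : ℝ) : EReal) = suppFun C d := EReal.coe_toReal hd.ne hbot
    have hler : ∀ t : ℝ, 0 ≤ t → ⟪d, x₀⟫_ℝ + t * ⟪d, y⟫_ℝ ≤ s := by
      intro t ht
      have := hle t ht
      rw [← hsc] at this
      exact_mod_cast this
    have h0 : ⟪d, x₀⟫_ℝ ≤ s := by simpa using hler 0 le_rfl
    set t : ℝ := (s - ⟪d, x₀⟫_ℝ + 1) / ⟪d, y⟫_ℝ with htdef
    have ht : 0 ≤ t := div_nonneg (by linarith) hpos.le
    have := hler t ht
    rw [htdef, div_mul_cancel₀ _ (ne_of_gt hpos)] at this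
    linarith
  · intro hd
    obtain ⟨r, hr, hsub⟩ := h 1 one_pos
    have key : ∀ x ∈ C, ⟪d, x⟫_ℝ ≤ ‖d‖ * (r + 1) := by
      intro x hx
      obtain ⟨u, hu, b, hb, rfl⟩ := hsub hx
      obtain ⟨m, hm, y, hy, rfl⟩ := hu
      have h1 : ⟪d, m⟫_ℝ ≤ ‖d‖ * r := by
        have := real_inner_le_norm d m
        have hmr : ‖m‖ ≤ r := mem_closedBall_zero_iff.mp hm.2
        nlinarith [norm_nonneg d]
      have h2 : ⟪d, y⟫_ℝ ≤ 0 := hd y hy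
      have h3 : ⟪d, b⟫_ℝ ≤ ‖d‖ * 1 := by
        have := real_inner_le_norm d b
        have hbr : ‖b‖ ≤ 1 := mem_closedBall_zero_iff.mp hb
        nlinarith [norm_nonneg d]
      have : ⟪d, m + y + b⟫_ℝ = ⟪d, m⟫_ℝ + ⟪d, y⟫_ℝ + ⟪d, b⟫_ℝ := by
        rw [inner_add_right, inner_add_right]
      nlinarith
    have : suppFun C d ≤ ((‖d‖ * (r + 1) : ℝ) : EReal) := by
      refine iSup₂_le fun x hx => ?_
      exact_mod_cast key x hx
    exact lt_of_le_of_lt this (EReal.coe_lt_top _)
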